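/- For $\lambda_1,\lambda_2>0$, the total variation distance between Poisson distributions satisfies $d_{TV}(\mathrm{Poi}(\lambda_1),\mathrm{Poi}(\lambda_2)) \le \frac{e^{|\lambda_1-\lambda_2|}-e^{-|\lambda_1-\lambda_2|}}{2}$, i.e., it is at most $\sinh(|\lambda_1-\lambda_2|)$. -/

import Mathlib

open Real

lemma tsum_poi (l : ℝ) : ∑' k : ℕ, Real.exp (-l) * l ^ k / (Nat.factorial k) = 1 := by
  have h : ∀ k : ℕ, Real.exp (-l) * l ^ k / (Nat.factorial k)
      = Real.exp (-l) * (l ^ k / (Nat.factorial k)) := fun k => mul_div_assoc _ _ _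
  simp_rw [h]
  rw [tsum_mul_left]
  have : ∑' k : ℕ, l ^ k / (Nat.factorial k : ℝ) = Real.exp l := by
    rw [Real.exp_eq_exp_ℝ, NormedSpace.exp_eq_tsum_div]
  rw [this, ← Real.exp_add]
  simp

lemma summable_poi (l : ℝ) :
    Summable (fun k : ℕ => Real.exp (-l) * l ^ k / (Nat.factorial k)) := by
  have h : ∀ k : ℕ, Real.exp (-l) * l ^ k / (Nat.factorial k)
      = Real.exp (-l) * (l ^ k / (Nat.factorial k)) := fun k => mul_div_assoc _ _ _
  simp_rw [h]
  exact (Real.summable_pow_div_factorial l).mul_left _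

lemma aux (l₁ l₂ : ℝ) (h₂ : 0 < l₂) (hle : l₂ ≤ l₁) :
    ∑' k : ℕ, |Real.exp (-l₁) * l₁ ^ k / (Nat.factorial k) -
          Real.exp (-l₂) * l₂ ^ k / (Nat.factorial k)|
      ≤ 2 * (1 - Real.exp (-(l₁ - l₂))) := by
  set f : ℕ → ℝ := fun k => Real.exp (-l₁) * l₁ ^ k / (Nat.factorial k) with hf
  set g : ℕ → ℝ := fun k => Real.exp (-l₂) * l₂ ^ k / (Nat.factorial k) with hg
  set c : ℝ := 2 * (1 - Real.exp (-(l₁ - l₂))) with hc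
  have hgpos : ∀ k, 0 ≤ g k := fun k => by
    positivity
  have hcnn : 0 ≤ 1 - Real.exp (-(l₁ - l₂)) := by
    have : Real.exp (-(l₁ - l₂)) ≤ 1 := Real.exp_le_one_iff.mpr (by linarith)
    linarith
  have key : ∀ k, |f k - g k| ≤ (f k - g k) + c * g k := by
    intro k
    have hlow : Real.exp (-(l₁ - l₂)) * g k ≤ f k := by
      have hpow : l₂ ^ k ≤ l₁ ^ k := pow_le_pow_left₀ h₂.le hle k
      have : Real.exp (-(l₁ - l₂)) * Real.exp (-l₂) = Real.exp (-l₁) := by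
        rw [← Real.exp_add]; ring_nf
      calc Real.exp (-(l₁ - l₂)) * g k
          = Real.exp (-l₁) * l₂ ^ k / (Nat.factorial k) := by
            rw [hg]; field_simp; rw [← this]
        _ ≤ f k := by
            simp only [hf]
            gcongr
    rcases le_or_gt (g k) (f k) with h | h
    · rw [abs_of_nonneg (by linarith)]
      have := mul_nonneg hcnn (hgpos k)
      nlinarith [hgpos k]
    · rw [abs_of_neg (by linarith)]
      nlinarith [hgpos k]
  have hsf := summable_poi l₁
  have hsg := summable_poi l₂
  have hS : Summable (fun k => (f k - g k) + c * g k) :=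
    (hsf.sub hsg).add (hsg.mul_left c)
  have habs : Summable (fun k => |f k - g k|) := by
    apply Summable.of_nonneg_of_le (fun k => abs_nonneg _)
      (fun k => (abs_sub _ _).trans_eq ?_) (hsf.abs.add hsg.abs)
    rfl
  calc ∑' k, |f k - g k| ≤ ∑' k, ((f k - g k) + c * g k) :=
        Summable.tsum_le_tsum key habs hS
    _ = (∑' k, f k - ∑' k, g k) + c * ∑' k, g k := by
        rw [Summable.tsum_add (hsf.sub hsg) (hsg.mul_left c), Summable.tsum_sub hsf hsg, tsum_mul_left]
    _ = c := by rw [tsum_poi, tsum_poi]; ring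

theorem tv_poisson_le_sinh (l₁ l₂ : ℝ) (h₁ : 0 < l₁) (h₂ : 0 < l₂) :
    (1 / 2) * ∑' k : ℕ,
        |Real.exp (-l₁) * l₁ ^ k / (Nat.factorial k) -
          Real.exp (-l₂) * l₂ ^ k / (Nat.factorial k)| ≤
      (Real.exp |l₁ - l₂| - Real.exp (-|l₁ - l₂|)) / 2 := by
  have cosh2 : 2 ≤ Real.exp |l₁ - l₂| + Real.exp (-|l₁ - l₂|) := by
    have := Real.add_one_le_exp |l₁ - l₂|
    have := Real.add_one_le_exp (-|l₁ - l₂|)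
    linarith
  rcases le_total l₂ l₁ with h | h
  · have := aux l₁ l₂ h₂ h
    rw [abs_of_nonneg (by linarith : (0:ℝ) ≤ l₁ - l₂)]
    rw [abs_of_nonneg (by linarith : (0:ℝ) ≤ l₁ - l₂)] at cosh2
    linarith
  · have := aux l₂ l₁ h₁ h
    have hswap : ∀ k : ℕ, |Real.exp (-l₁) * l₁ ^ k / (Nat.factorial k) -
          Real.exp (-l₂) * l₂ ^ k / (Nat.factorial k)|
        = |Real.exp (-l₂) * l₂ ^ k / (Nat.factorial k) -
          Real.exp (-l₁) * l₁ ^ k / (Nat.factorial k)| := fun k => abs_sub_comm _ _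
    simp_rw [hswap]
    rw [abs_of_nonpos (by linarith : l₁ - l₂ ≤ 0)] at cosh2 ⊢
    rw [neg_neg] at cosh2 ⊢
    have e1 : Real.exp (-(l₂ - l₁)) = Real.exp (l₁ - l₂) := by ring_nf
    rw [e1] at this
    linarith
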